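/- Let σ > 0 be a real number. If s(i) ≠ 0 for all i ≥ 1, then Σ_{m=0}^∞ a⁰(p^m)·p^{−mσ} = (1 − p^{−σ})^{−1}. If there exists i ≥ 1 with s(i) = 0 and i₀ is the least such integer, then Σ_{m=0}^∞ a⁰(p^m)·p^{−mσ} = p^σ·( 1/(p^σ − 1) − 1/(p^{(i₀+1)σ} − 1) ). -/

import Mathlib

private lemma key_ident (p : ℕ) (a : ℤ) (s : ℕ → ℤ)
    (hs0 : s 0 = 1) (hs1 : s 1 = a)
    (hrec : ∀ m : ℕ, s (m + 2) = a * s (m + 1) - (p : ℤ) * s m) :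
    ∀ m j : ℕ, s (m + j + 2) = s (j + 1) * s (m + 1) - (p : ℤ) * s j * s m := by
  have hs2 : s 2 = a * a - (p : ℤ) := by
    have h := hrec 0
    simp only [Nat.zero_add, zero_add] at h
    rw [hs1, hs0] at h
    linarith
  have main : ∀ m j : ℕ,
      (s (m + j + 2) = s (j + 1) * s (m + 1) - (p : ℤ) * s j * s m) ∧
      (s (m + 1 + j + 2) = s (j + 1) * s (m + 1 + 1) - (p : ℤ) * s j * s (m + 1)) := by
    intro m
    induction m with
    | zero =>
      intro j
      constructor
      · rw [show 0 + j + 2 = j + 2 by omega, hrec j,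
          show (0 : ℕ) + 1 = 1 by omega, hs1, hs0]
        ring
      · rw [show 0 + 1 + j + 2 = (j + 1) + 2 by omega, hrec (j + 1), hrec j,
          show (0 : ℕ) + 1 + 1 = 2 by omega, hs2,
          show (0 : ℕ) + 1 = 1 by omega, hs1]
        ring
    | succ m ih =>
      intro j
      refine ⟨(ih j).2, ?_⟩
      have h1 := (ih j).1
      have h2 := (ih j).2
      rw [show m + 1 + 1 + j + 2 = (m + j + 2) + 2 by omega,
        hrec (m + j + 2),
        show m + j + 2 + 1 = m + 1 + j + 2 by omega, h2, h1,
        show m + 1 + 1 + 1 = (m + 1) + 2 by omega, hrec (m + 1),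
        show m + 1 + 1 = m + 2 by omega, hrec m]
      ring
  intro m j
  exact (main m j).1

private lemma zero_iff (p : ℕ) (hp : p.Prime) (a : ℤ) (s : ℕ → ℤ)
    (hs0 : s 0 = 1) (hs1 : s 1 = a)
    (hrec : ∀ m : ℕ, s (m + 2) = a * s (m + 1) - (p : ℤ) * s m)
    (i₀ : ℕ) (h : IsLeast {i : ℕ | 1 ≤ i ∧ s i = 0} i₀) :
    ∀ m : ℕ, s m = 0 ↔ (i₀ + 1) ∣ (m + 1) := by
  obtain ⟨⟨hi1, hi0⟩, hmin⟩ := h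
  have hlt : ∀ m, m < i₀ → s m ≠ 0 := by
    intro m hm
    rcases Nat.eq_zero_or_pos m with h0 | h1
    · subst h0; rw [hs0]; norm_num
    · intro hz
      have := hmin ⟨h1, hz⟩
      omega
  have hpne : (p : ℤ) ≠ 0 := by
    exact_mod_cast hp.ne_zero
  have hsucc : s (i₀ + 1) ≠ 0 := by
    obtain ⟨k, rfl⟩ : ∃ k, i₀ = k + 1 := ⟨i₀ - 1, by omega⟩
    have h := hrec k
    rw [hi0] at h
    have hk : s k ≠ 0 := hlt k (by omega)
    rw [show k + 1 + 1 = k + 2 by omega, h]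
    simp only [mul_zero, zero_sub, ne_eq, neg_eq_zero, mul_eq_zero, not_or]
    exact ⟨hpne, hk⟩
  have hshift : ∀ m, s (m + i₀ + 1) = s (i₀ + 1) * s m := by
    intro m
    cases m with
    | zero =>
      rw [show 0 + i₀ + 1 = i₀ + 1 by omega, hs0, mul_one]
    | succ n =>
      have hk := key_ident p a s hs0 hs1 hrec n i₀
      rw [show n + 1 + i₀ + 1 = n + i₀ + 2 by omega, hk, hi0]
      ring
  intro m
  induction m using Nat.strong_induction_on with
  | _ m ih =>
    rcases lt_trichotomy m i₀ with hm | hm | hm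
    · constructor
      · intro hz; exact absurd hz (hlt m hm)
      · intro hd
        have := Nat.le_of_dvd (by omega) hd
        omega
    · subst hm
      simp [hi0]
    · obtain ⟨n, rfl⟩ : ∃ n, m = n + i₀ + 1 := ⟨m - i₀ - 1, by omega⟩
      rw [hshift n, mul_eq_zero]
      have hiff := ih n (by omega)
      constructor
      · rintro (h | h)
        · exact absurd h hsucc
        · have := hiff.mp h
          obtain ⟨c, hc⟩ := this
          exact ⟨c + 1, by rw [Nat.mul_succ, ← hc]; omega⟩
      · intro hd
        right
        apply hiff.mpr
        have : (i₀ + 1) ∣ (n + 1 + (i₀ + 1)) := by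
          rw [show n + 1 + (i₀ + 1) = n + i₀ + 1 + 1 by omega]; exact hd
        exact (Nat.dvd_add_self_right).mp this

/-- Let `σ > 0`.  If `s i ≠ 0` for all `i ≥ 1` then
`Σ_{m=0}^∞ a⁰(p^m) p^{-mσ} = (1 - p^{-σ})⁻¹`, and if `i₀` is the least
`i ≥ 1` with `s i = 0` then
`Σ_{m=0}^∞ a⁰(p^m) p^{-mσ} = p^σ (1/(p^σ - 1) - 1/(p^{(i₀+1)σ} - 1))`.
Here `a⁰(p^m)` is `1` if `s m ≠ 0` and `0` if `s m = 0`, where `s` is the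
sequence `s 0 = 1`, `s 1 = a`, `s (m+2) = a * s (m+1) - p * s m`. -/
theorem stmt_3 (p : ℕ) (hp : p.Prime) (a : ℤ) (s : ℕ → ℤ)
    (hs0 : s 0 = 1) (hs1 : s 1 = a)
    (hrec : ∀ m : ℕ, s (m + 2) = a * s (m + 1) - (p : ℤ) * s m)
    (σ : ℝ) (hσ : 0 < σ) :
    ((∀ i : ℕ, 1 ≤ i → s i ≠ 0) →
      ∑' m : ℕ, (if s m = 0 then (0 : ℝ) else 1) * (p : ℝ) ^ (-(m : ℝ) * σ) =
        (1 - (p : ℝ) ^ (-σ))⁻¹) ∧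
    (∀ i₀ : ℕ, IsLeast {i : ℕ | 1 ≤ i ∧ s i = 0} i₀ →
      ∑' m : ℕ, (if s m = 0 then (0 : ℝ) else 1) * (p : ℝ) ^ (-(m : ℝ) * σ) =
        (p : ℝ) ^ σ *
          (1 / ((p : ℝ) ^ σ - 1) - 1 / ((p : ℝ) ^ (((i₀ : ℝ) + 1) * σ) - 1))) := by
  have hp1 : (1 : ℝ) < (p : ℝ) := by exact_mod_cast hp.one_lt
  have hp0 : (0 : ℝ) < (p : ℝ) := by linarith
  set x : ℝ := (p : ℝ) ^ (-σ) with hxdef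
  have hx0 : 0 < x := Real.rpow_pos_of_pos hp0 _
  have hx1 : x < 1 := Real.rpow_lt_one_of_one_lt_of_neg hp1 (by linarith)
  have hterm : ∀ m : ℕ, (p : ℝ) ^ (-(m : ℝ) * σ) = x ^ m := by
    intro m
    rw [hxdef, show (-(m : ℝ) * σ) = (-σ) * (m : ℕ) by push_cast; ring,
      Real.rpow_mul hp0.le, Real.rpow_natCast]
  constructor
  · intro hne
    have hone : ∀ m : ℕ, (if s m = 0 then (0 : ℝ) else 1) = 1 := by
      intro m
      rcases Nat.eq_zero_or_pos m with h0 | h1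
      · subst h0; rw [if_neg (by rw [hs0]; norm_num)]
      · rw [if_neg (hne m h1)]
    rw [tsum_congr (fun m => by rw [hone m, hterm m, one_mul])]
    exact tsum_geometric_of_lt_one hx0.le hx1
  · intro i₀ hi
    have hchar := zero_iff p hp a s hs0 hs1 hrec i₀ hi
    have hi1 : 1 ≤ i₀ := hi.1.1
    set g : ℕ → ℝ := fun m => if (i₀ + 1) ∣ (m + 1) then x ^ m else 0 with hgdef
    have hrw : ∀ m : ℕ,
        (if s m = 0 then (0 : ℝ) else 1) * (p : ℝ) ^ (-(m : ℝ) * σ) = x ^ m - g m := by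
      intro m
      rw [hterm m]
      by_cases h : s m = 0
      · simp [hgdef, h, (hchar m).mp h]
      · simp [hgdef, h, mt (hchar m).mpr h]
    have hgeo : Summable (fun m : ℕ => x ^ m) := summable_geometric_of_lt_one hx0.le hx1
    have hgsum : Summable g := by
      apply Summable.of_nonneg_of_le (fun m => ?_) (fun m => ?_) hgeo
      · simp only [hgdef]; split <;> positivity
      · simp only [hgdef]; split
        · exact le_rfl
        · positivity
    have hxn1 : x ^ (i₀ + 1) < 1 := pow_lt_one₀ hx0.le hx1 (by omega)
    -- compute the sum of g
    have hginj : Function.Injective (fun k : ℕ => k * (i₀ + 1) + i₀) := by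
      intro b c hbc
      simp only at hbc
      have : b * (i₀ + 1) = c * (i₀ + 1) := by omega
      exact Nat.eq_of_mul_eq_mul_right (by omega) this
    have hgsupp : Function.support g ⊆ Set.range (fun k : ℕ => k * (i₀ + 1) + i₀) := by
      intro m hm
      rw [Function.mem_support, hgdef] at hm
      dsimp only at hm
      by_cases hd : (i₀ + 1) ∣ (m + 1)
      · obtain ⟨c, hc⟩ := hd
        rcases Nat.eq_zero_or_pos c with h0 | h1
        · rw [h0, mul_zero] at hc; omega
        · obtain ⟨c', rfl⟩ : ∃ c', c = c' + 1 := ⟨c - 1, by omega⟩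
          refine ⟨c', ?_⟩
          have : m + 1 = (c' * (i₀ + 1) + i₀) + 1 := by
            rw [hc]; ring
          simp only
          omega
      · exact absurd (if_neg hd) hm
    have hgval : ∀ k : ℕ, g (k * (i₀ + 1) + i₀) = x ^ i₀ * (x ^ (i₀ + 1)) ^ k := by
      intro k
      rw [hgdef]
      dsimp only
      rw [if_pos ⟨k + 1, by ring⟩, ← pow_mul, ← pow_add]
      congr 1
      ring
    have hgtsum : ∑' m, g m = x ^ i₀ * (1 - x ^ (i₀ + 1))⁻¹ := by
      rw [← hginj.tsum_eq hgsupp]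
      rw [tsum_congr hgval, tsum_mul_left,
        tsum_geometric_of_lt_one (by positivity) hxn1]
    rw [tsum_congr hrw, Summable.tsum_sub hgeo hgsum, tsum_geometric_of_lt_one hx0.le hx1, hgtsum]
    -- now pure algebra
    set y : ℝ := (p : ℝ) ^ σ with hydef
    have hy1 : 1 < y := Real.one_lt_rpow_iff_of_pos hp0 |>.mpr (Or.inl ⟨hp1, hσ⟩)
    have hxy : x = y⁻¹ := by
      rw [hxdef, hydef, Real.rpow_neg hp0.le]
    have hyexp : (p : ℝ) ^ (((i₀ : ℝ) + 1) * σ) = y ^ (i₀ + 1) := by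
      rw [hydef, show ((i₀ : ℝ) + 1) * σ = σ * ((i₀ + 1 : ℕ) : ℝ) by push_cast; ring,
        Real.rpow_mul hp0.le, Real.rpow_natCast]
    rw [hyexp, hxy]
    have hy0 : y ≠ 0 := by positivity
    have hy1' : y - 1 ≠ 0 := by intro h; nlinarith
    have hyn1 : y ^ (i₀ + 1) - 1 ≠ 0 := by
      have : 1 < y ^ (i₀ + 1) := one_lt_pow₀ hy1 (by omega)
      intro h; nlinarith
    have hyn0 : y ^ (i₀ + 1) ≠ 0 := pow_ne_zero _ hy0
    have h1 : (1 : ℝ) - y⁻¹ ≠ 0 := by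
      rw [hxy] at hx1 hx0
      intro h
      have : y⁻¹ = 1 := by linarith
      rw [this] at hx1; linarith
    have h2 : (1 : ℝ) - (y⁻¹) ^ (i₀ + 1) ≠ 0 := by
      rw [hxy] at hxn1
      intro h
      have : (y⁻¹) ^ (i₀ + 1) = 1 := by linarith
      rw [this] at hxn1; linarith
    rw [inv_pow, inv_pow] at *
    field_simp
    ring
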